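/- In the one-period model on Ω = (0,1]: (i) every separating measure Q (i.e., probability Q ≪ P with density satisfying q₁(n) = n·q₂(n) for all n) whose density dQ/dP is square-integrable with respect to P satisfies X₁ ∈ L¹(Q) and E_Q[X₁] = 0; (ii) for every x ∈ ℝ there is no admissible strategy α with x + α·X₁ ≥ X₁ P-a.s., i.e. the super replication price of X₁ is +∞. -/

import Mathlib

open MeasureTheory ENNReal NNReal

/-- `P`: Lebesgue measure restricted to `Ω = (0,1]`. -/
noncomputable def Pmeas : Measure ℝ := MeasureTheory.volume.restrict (Set.Ioc 0 1)

/-- `I_n = (2^{-n}, 2^{-(n-1)}]` (intended for `n ≥ 1`). -/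
def Iset (n : ℕ) : Set ℝ := Set.Ioc ((2 : ℝ) ^ n)⁻¹ ((2 : ℝ) ^ (n - 1))⁻¹

/-- `J_n^1 = (2^{-n}, 3·2^{-(n+1)}]`. -/
def J1 (n : ℕ) : Set ℝ := Set.Ioc ((2 : ℝ) ^ n)⁻¹ (3 * ((2 : ℝ) ^ (n + 1))⁻¹)

/-- `J_n^2 = (3·2^{-(n+1)}, 2^{-(n-1)}]`. -/
def J2 (n : ℕ) : Set ℝ := Set.Ioc (3 * ((2 : ℝ) ^ (n + 1))⁻¹) ((2 : ℝ) ^ (n - 1))⁻¹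

/-- A strategy: a function constant, equal to some `a n`, on each `I_n`. -/
def IsStrategy (α : ℝ → ℝ) : Prop :=
  ∃ a : ℕ → ℝ, ∀ n : ℕ, 1 ≤ n → ∀ ω ∈ Iset n, α ω = a n

/-- An admissible strategy: a strategy whose gain `α·X₁` is bounded below by a constant
`-c`, `P`-a.s. -/
def IsAdmissible (X₁ α : ℝ → ℝ) : Prop :=
  IsStrategy α ∧ ∃ c : ℝ, 0 ≤ c ∧ ∀ᵐ ω ∂Pmeas, -c ≤ α ω * X₁ ω


lemma pow_pred_inv {n : ℕ} (hn : 1 ≤ n) : ((2:ℝ)^(n-1))⁻¹ = 2 * ((2:ℝ)^n)⁻¹ := by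
  have h : (2:ℝ)^n = 2^(n-1) * 2 := by rw [← pow_succ, Nat.sub_add_cancel hn]
  have h1 : (0:ℝ) < 2^(n-1) := pow_pos two_pos _
  rw [h]; field_simp

lemma pow_succ_inv (n : ℕ) : ((2:ℝ)^(n+1))⁻¹ = ((2:ℝ)^n)⁻¹ / 2 := by
  rw [pow_succ]
  have h1 : (0:ℝ) < 2^n := pow_pos two_pos _
  field_simp

lemma mid_bounds {n : ℕ} (hn : 1 ≤ n) :
    ((2:ℝ)^n)⁻¹ < 3 * ((2:ℝ)^(n+1))⁻¹ ∧ 3 * ((2:ℝ)^(n+1))⁻¹ < ((2:ℝ)^(n-1))⁻¹ := by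
  have h1 : (0:ℝ) < ((2:ℝ)^n)⁻¹ := inv_pos.mpr (pow_pos two_pos _)
  rw [pow_pred_inv hn, pow_succ_inv]
  constructor <;> nlinarith

lemma J1_union_J2 {n : ℕ} (hn : 1 ≤ n) : J1 n ∪ J2 n = Iset n := by
  have h := mid_bounds hn
  exact Set.Ioc_union_Ioc_eq_Ioc h.1.le h.2.le

lemma J1_subset {n : ℕ} (hn : 1 ≤ n) : J1 n ⊆ Iset n := by
  rw [← J1_union_J2 hn]; exact Set.subset_union_left

lemma J2_subset {n : ℕ} (hn : 1 ≤ n) : J2 n ⊆ Iset n := by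
  rw [← J1_union_J2 hn]; exact Set.subset_union_right

lemma J1_disj_J2 (n : ℕ) : Disjoint (J1 n) (J2 n) := Set.Ioc_disjoint_Ioc_of_le le_rfl

lemma Iset_subset_Ioc {n : ℕ} (hn : 1 ≤ n) : Iset n ⊆ Set.Ioc 0 1 := by
  apply Set.Ioc_subset_Ioc
  · exact (inv_pos.mpr (pow_pos two_pos _)).le
  · rw [inv_le_one_iff₀]
    right; exact one_le_pow₀ (by norm_num)

lemma Iset_disj {k l : ℕ} (hk : 1 ≤ k) (hl : 1 ≤ l) (hkl : k ≠ l) :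
    Disjoint (Iset k) (Iset l) := by
  rw [Iset, Iset, Set.Ioc_disjoint_Ioc]
  rcases hkl.lt_or_gt with h | h
  · -- k < l : min of uppers = (2^(l-1))⁻¹ ≤ (2^k)⁻¹ ≤ max of lowers
    refine le_trans (min_le_right _ _) (le_trans ?_ (le_max_left _ _))
    apply inv_anti₀ (pow_pos two_pos _)
    exact pow_le_pow_right₀ one_le_two (by omega)
  · refine le_trans (min_le_left _ _) (le_trans ?_ (le_max_right _ _))
    apply inv_anti₀ (pow_pos two_pos _)
    exact pow_le_pow_right₀ one_le_two (by omega)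

lemma vol_J1 {n : ℕ} (hn : 1 ≤ n) : volume (J1 n) = ENNReal.ofReal (((2:ℝ)^(n+1))⁻¹) := by
  rw [J1, Real.volume_Ioc]
  congr 1
  rw [pow_succ_inv]
  ring

lemma vol_J2 {n : ℕ} (hn : 1 ≤ n) : volume (J2 n) = ENNReal.ofReal (((2:ℝ)^(n+1))⁻¹) := by
  rw [J2, Real.volume_Ioc]
  congr 1
  rw [pow_pred_inv hn, pow_succ_inv]
  ring

lemma Ioc_eq_iUnion : Set.Ioc (0:ℝ) 1 = ⋃ m : ℕ, Iset (m+1) := by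
  apply Set.Subset.antisymm
  · intro ω hω
    have hex : ∃ k : ℕ, ((2:ℝ)^k)⁻¹ < ω := by
      obtain ⟨k, hk⟩ := exists_pow_lt_of_lt_one hω.1 (by norm_num : (1:ℝ)/2 < 1)
      exact ⟨k, by simpa [one_div, inv_pow] using hk⟩
    classical
    let k₀ := Nat.find hex
    have hk₀ : ((2:ℝ)^k₀)⁻¹ < ω := Nat.find_spec hex
    have hk₀pos : 1 ≤ k₀ := by
      rcases Nat.eq_zero_or_pos k₀ with h | h
      · exfalso
        have := hk₀
        rw [h] at this
        simp at this
        exact absurd hω.2 (not_le.mpr this)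
      · exact h
    have hup : ω ≤ ((2:ℝ)^(k₀-1))⁻¹ := by
      by_contra hcon
      exact Nat.find_min hex (Nat.sub_lt hk₀pos one_pos) (not_le.mp hcon)
    refine Set.mem_iUnion.mpr ⟨k₀ - 1, ?_⟩
    have : k₀ - 1 + 1 = k₀ := Nat.succ_pred_eq_of_pos hk₀pos
    rw [Iset, this]
    exact ⟨hk₀, by simpa using hup⟩
  · exact Set.iUnion_subset fun m => Iset_subset_Ioc (Nat.le_add_left 1 m)

noncomputable def Fx : ℝ → ℝ := fun ω =>
  (∑' m : ℕ, (J1 (m+1)).indicator (fun _ => ((m+1 : ℕ) : ℝ≥0∞)) ω).toReal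
  - (∑' m : ℕ, (J2 (m+1)).indicator (fun _ => (((m+1 : ℕ) : ℝ≥0∞))^2) ω).toReal

lemma measurable_Fx : Measurable Fx := by
  unfold Fx
  apply Measurable.sub
  · exact (Measurable.ennreal_tsum fun m =>
      measurable_const.indicator measurableSet_Ioc).ennreal_toReal
  · exact (Measurable.ennreal_tsum fun m =>
      measurable_const.indicator measurableSet_Ioc).ennreal_toReal

lemma Fx_on_J1 {n : ℕ} (hn : 1 ≤ n) {ω : ℝ} (hω : ω ∈ J1 n) : Fx ω = (n : ℝ) := by
  have hmem : ω ∈ Iset n := J1_subset hn hω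
  have h1 : (∑' m : ℕ, (J1 (m+1)).indicator (fun _ => ((m+1 : ℕ) : ℝ≥0∞)) ω)
      = ((n : ℕ) : ℝ≥0∞) := by
    rw [tsum_eq_single (n-1) ?_]
    · have h : n - 1 + 1 = n := Nat.succ_pred_eq_of_pos hn
      rw [h, Set.indicator_of_mem hω]
    · intro m hm
      apply Set.indicator_of_notMem
      intro hmm
      have : m + 1 ≠ n := by omega
      exact (Iset_disj (Nat.le_add_left 1 m) hn this).ne_of_mem
        (J1_subset (Nat.le_add_left 1 m) hmm) hmem rfl
  have h2 : (∑' m : ℕ, (J2 (m+1)).indicator (fun _ => (((m+1 : ℕ) : ℝ≥0∞))^2) ω) = 0 := by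
    rw [ENNReal.tsum_eq_zero]
    intro m
    apply Set.indicator_of_notMem
    intro hmm
    rcases eq_or_ne (m+1) n with h | h
    · subst h
      exact (J1_disj_J2 (m+1)).ne_of_mem hω hmm rfl
    · exact (Iset_disj (Nat.le_add_left 1 m) hn h).ne_of_mem
        (J2_subset (Nat.le_add_left 1 m) hmm) hmem rfl
  rw [Fx, h1, h2]
  simp

lemma Fx_on_J2 {n : ℕ} (hn : 1 ≤ n) {ω : ℝ} (hω : ω ∈ J2 n) : Fx ω = -((n : ℝ)^2) := by
  have hmem : ω ∈ Iset n := J2_subset hn hω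
  have h1 : (∑' m : ℕ, (J1 (m+1)).indicator (fun _ => ((m+1 : ℕ) : ℝ≥0∞)) ω) = 0 := by
    rw [ENNReal.tsum_eq_zero]
    intro m
    apply Set.indicator_of_notMem
    intro hmm
    rcases eq_or_ne (m+1) n with h | h
    · subst h
      exact (J1_disj_J2 (m+1)).ne_of_mem hmm hω rfl
    · exact (Iset_disj (Nat.le_add_left 1 m) hn h).ne_of_mem
        (J1_subset (Nat.le_add_left 1 m) hmm) hmem rfl
  have h2 : (∑' m : ℕ, (J2 (m+1)).indicator (fun _ => (((m+1 : ℕ) : ℝ≥0∞))^2) ω)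
      = ((n : ℕ) : ℝ≥0∞)^2 := by
    rw [tsum_eq_single (n-1) ?_]
    · have h : n - 1 + 1 = n := Nat.succ_pred_eq_of_pos hn
      rw [h, Set.indicator_of_mem hω]
    · intro m hm
      apply Set.indicator_of_notMem
      intro hmm
      have : m + 1 ≠ n := by omega
      exact (Iset_disj (Nat.le_add_left 1 m) hn this).ne_of_mem
        (J2_subset (Nat.le_add_left 1 m) hmm) hmem rfl
  rw [Fx, h1, h2]
  rw [ENNReal.toReal_pow]
  simp

lemma ae_Pmeas_of_forall {p : ℝ → Prop} (h : ∀ ω ∈ Set.Ioc (0:ℝ) 1, p ω) :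
    ∀ᵐ ω ∂Pmeas, p ω := by
  rw [Pmeas]
  exact ae_restrict_of_forall_mem measurableSet_Ioc h

lemma mem_J1_or_J2 {ω : ℝ} (hω : ω ∈ Set.Ioc (0:ℝ) 1) :
    ∃ n : ℕ, 1 ≤ n ∧ (ω ∈ J1 n ∨ ω ∈ J2 n) := by
  rw [Ioc_eq_iUnion] at hω
  obtain ⟨m, hm⟩ := Set.mem_iUnion.mp hω
  rw [← J1_union_J2 (Nat.le_add_left 1 m)] at hm
  exact ⟨m+1, Nat.le_add_left 1 m, hm⟩

lemma X1_ae_Fx (X₁ : ℝ → ℝ)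
    (hX₁ : ∀ n : ℕ, 1 ≤ n →
      (∀ ω ∈ J1 n, X₁ ω = (n : ℝ)) ∧ (∀ ω ∈ J2 n, X₁ ω = -((n : ℝ) ^ 2))) :
    X₁ =ᵐ[Pmeas] Fx := by
  apply ae_Pmeas_of_forall
  intro ω hω
  obtain ⟨n, hn, h | h⟩ := mem_J1_or_J2 hω
  · rw [(hX₁ n hn).1 ω h, Fx_on_J1 hn h]
  · rw [(hX₁ n hn).2 ω h, Fx_on_J2 hn h]

lemma Pmeas_J1 {n : ℕ} (hn : 1 ≤ n) : Pmeas (J1 n) = ENNReal.ofReal (((2:ℝ)^(n+1))⁻¹) := by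
  rw [Pmeas, Measure.restrict_apply (by exact measurableSet_Ioc),
    Set.inter_eq_self_of_subset_left ((J1_subset hn).trans (Iset_subset_Ioc hn)), vol_J1 hn]

lemma Pmeas_J2 {n : ℕ} (hn : 1 ≤ n) : Pmeas (J2 n) = ENNReal.ofReal (((2:ℝ)^(n+1))⁻¹) := by
  rw [Pmeas, Measure.restrict_apply (by exact measurableSet_Ioc),
    Set.inter_eq_self_of_subset_left ((J2_subset hn).trans (Iset_subset_Ioc hn)), vol_J2 hn]

lemma exists_mem_of_ae {p : ℝ → Prop} (hp : ∀ᵐ ω ∂Pmeas, p ω) {S : Set ℝ}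
    (hS : Pmeas S ≠ 0) : ∃ ω ∈ S, p ω := by
  by_contra hcon
  push_neg at hcon
  have hsub : S ⊆ {ω | ¬ p ω} := fun ω hω => hcon ω hω
  exact hS (measure_mono_null hsub (ae_iff.mp hp))

lemma Pmeas_J1_ne {n : ℕ} (hn : 1 ≤ n) : Pmeas (J1 n) ≠ 0 := by
  rw [Pmeas_J1 hn]
  simp [ENNReal.ofReal_eq_zero, not_le, inv_pos]

lemma Pmeas_J2_ne {n : ℕ} (hn : 1 ≤ n) : Pmeas (J2 n) ≠ 0 := by
  rw [Pmeas_J2 hn]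
  simp [ENNReal.ofReal_eq_zero, not_le, inv_pos]

lemma part_two (X₁ : ℝ → ℝ)
    (hX₁ : ∀ n : ℕ, 1 ≤ n →
      (∀ ω ∈ J1 n, X₁ ω = (n : ℝ)) ∧ (∀ ω ∈ J2 n, X₁ ω = -((n : ℝ) ^ 2))) :
    ∀ x : ℝ, ¬ ∃ α : ℝ → ℝ, IsAdmissible X₁ α ∧ ∀ᵐ ω ∂Pmeas, X₁ ω ≤ x + α ω * X₁ ω := by
  rintro x ⟨α, ⟨⟨a, ha⟩, c, hc, hadm⟩, hsup⟩
  obtain ⟨N, hN⟩ := exists_nat_gt (max (x + c) 1)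
  have hN1' : (1:ℝ) < N := lt_of_le_of_lt (le_max_right _ _) hN
  have hNxc : x + c < (N:ℝ) := lt_of_le_of_lt (le_max_left _ _) hN
  have hN1 : 1 ≤ N := by exact_mod_cast hN1'.le
  have hall := hadm.and hsup
  obtain ⟨ω₁, hω₁, h1a, h1b⟩ := exists_mem_of_ae hall (Pmeas_J1_ne hN1)
  obtain ⟨ω₂, hω₂, h2a, h2b⟩ := exists_mem_of_ae hall (Pmeas_J2_ne hN1)
  rw [ha N hN1 ω₁ (J1_subset hN1 hω₁), (hX₁ N hN1).1 ω₁ hω₁] at h1a h1b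
  rw [ha N hN1 ω₂ (J2_subset hN1 hω₂), (hX₁ N hN1).2 ω₂ hω₂] at h2a h2b
  set r := a N with hr
  have hf1 : (N:ℝ) ≤ x + r * N := h1b
  have hf2 : r * (N:ℝ)^2 ≤ c := by nlinarith [h2a]
  have hrN : c < r * N := by linarith
  nlinarith [mul_pos (show (0:ℝ) < r*N - c by linarith)
      (show (0:ℝ) < (N:ℝ) by linarith),
    mul_nonneg hc (show (0:ℝ) ≤ (N:ℝ) - 1 by linarith)]

lemma measJ1 (n : ℕ) : MeasurableSet (J1 n) := measurableSet_Ioc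
lemma measJ2 (n : ℕ) : MeasurableSet (J2 n) := measurableSet_Ioc

lemma part_one (X₁ : ℝ → ℝ)
    (hX₁ : ∀ n : ℕ, 1 ≤ n →
      (∀ ω ∈ J1 n, X₁ ω = (n : ℝ)) ∧ (∀ ω ∈ J2 n, X₁ ω = -((n : ℝ) ^ 2)))
    (q₁ q₂ : ℕ → ℝ) (d : ℝ → ℝ) (Q : Measure ℝ)
    (hq₁ : ∀ n, 0 ≤ q₁ n) (hq₂ : ∀ n, 0 ≤ q₂ n) (hd : Measurable d)
    (hdJ : ∀ n : ℕ, 1 ≤ n → (∀ ω ∈ J1 n, d ω = q₁ n) ∧ (∀ ω ∈ J2 n, d ω = q₂ n))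
    (hQ : Q = Pmeas.withDensity (fun ω => ENNReal.ofReal (d ω)))
    (hprob : IsProbabilityMeasure Q)
    (hsep : ∀ n : ℕ, 1 ≤ n → q₁ n = (n : ℝ) * q₂ n)
    (hL2 : Integrable (fun ω => d ω ^ 2) Pmeas) :
    Integrable X₁ Q ∧ ∫ ω, X₁ ω ∂Q = 0 := by
  classical
  set f : ℝ → ℝ≥0 := fun ω => (d ω).toNNReal with hf
  have hfm : Measurable f := hd.real_toNNReal
  have hQ' : Q = Pmeas.withDensity (fun ω => (f ω : ℝ≥0∞)) := hQ
  set g : ℝ → ℝ := fun ω => (f ω : ℝ) * Fx ω with hgdef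
  have hsmul : (fun ω => f ω • Fx ω) = g := by
    funext ω
    rw [NNReal.smul_def, smul_eq_mul]
  have hgm : Measurable g := (measurable_coe_nnreal_real.comp hfm).mul measurable_Fx
  have hg1 : ∀ n : ℕ, 1 ≤ n → ∀ ω ∈ J1 n, g ω = (n:ℝ)^2 * q₂ n := by
    intro n hn ω hω
    have hd1 := (hdJ n hn).1 ω hω
    simp only [hgdef, hf]
    rw [hd1, Real.coe_toNNReal _ (hq₁ n), Fx_on_J1 hn hω, hsep n hn]
    ring
  have hg2 : ∀ n : ℕ, 1 ≤ n → ∀ ω ∈ J2 n, g ω = -((n:ℝ)^2 * q₂ n) := by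
    intro n hn ω hω
    have hd2 := (hdJ n hn).2 ω hω
    simp only [hgdef, hf]
    rw [hd2, Real.coe_toNNReal _ (hq₂ n), Fx_on_J2 hn hω]
    ring
  have hmeasI : ∀ m : ℕ, MeasurableSet (Iset (m+1)) := fun m => measurableSet_Ioc
  have hdisjI : Pairwise (Function.onFun Disjoint fun m : ℕ => Iset (m+1)) := by
    intro i j hij
    exact Iset_disj (Nat.le_add_left 1 i) (Nat.le_add_left 1 j) (by omega)
  have hPre : Pmeas = volume.restrict (⋃ m : ℕ, Iset (m+1)) := by
    rw [Pmeas, Ioc_eq_iUnion]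
  -- lintegral of ‖g‖ over each Iset
  have hpiece : ∀ m : ℕ, ∫⁻ ω in Iset (m+1), ‖g ω‖₊ ∂volume
      = 2 * ENNReal.ofReal (((m+1:ℕ):ℝ)^2 * q₂ (m+1) * ((2:ℝ)^(m+2))⁻¹) := by
    intro m
    have hn : 1 ≤ m + 1 := Nat.le_add_left 1 m
    have e1 : ∫⁻ ω in J1 (m+1), (‖g ω‖₊ : ℝ≥0∞) ∂volume
        = ENNReal.ofReal (((m+1:ℕ):ℝ)^2 * q₂ (m+1)) * volume (J1 (m+1)) := by
      rw [setLIntegral_congr_fun_ae (μ := volume) (s := J1 (m+1))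
        (f := fun ω => (‖g ω‖₊ : ℝ≥0∞))
        (g := fun _ => ENNReal.ofReal (((m+1:ℕ):ℝ)^2 * q₂ (m+1))) (measJ1 (m+1))
        (Filter.Eventually.of_forall (fun ω hω => by
          show (‖g ω‖₊ : ℝ≥0∞) = ENNReal.ofReal (((m+1:ℕ):ℝ)^2 * q₂ (m+1))
          rw [hg1 (m+1) hn ω hω,
            ← enorm_eq_nnnorm, Real.enorm_eq_ofReal (mul_nonneg (by positivity) (hq₂ (m+1)))])),
        setLIntegral_const]
    have e2 : ∫⁻ ω in J2 (m+1), (‖g ω‖₊ : ℝ≥0∞) ∂volume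
        = ENNReal.ofReal (((m+1:ℕ):ℝ)^2 * q₂ (m+1)) * volume (J2 (m+1)) := by
      rw [setLIntegral_congr_fun_ae (μ := volume) (s := J2 (m+1))
        (f := fun ω => (‖g ω‖₊ : ℝ≥0∞))
        (g := fun _ => ENNReal.ofReal (((m+1:ℕ):ℝ)^2 * q₂ (m+1))) (measJ2 (m+1))
        (Filter.Eventually.of_forall (fun ω hω => by
          show (‖g ω‖₊ : ℝ≥0∞) = ENNReal.ofReal (((m+1:ℕ):ℝ)^2 * q₂ (m+1))
          rw [hg2 (m+1) hn ω hω, nnnorm_neg,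
            ← enorm_eq_nnnorm, Real.enorm_eq_ofReal (mul_nonneg (by positivity) (hq₂ (m+1)))])),
        setLIntegral_const]
    rw [← J1_union_J2 hn, lintegral_union (measJ2 (m+1)) (J1_disj_J2 (m+1)), e1, e2,
      vol_J1 hn, vol_J2 hn,
      ← ENNReal.ofReal_mul (mul_nonneg (by positivity) (hq₂ (m+1))), two_mul]
  have htot : ∫⁻ ω, ‖g ω‖₊ ∂Pmeas
      = ∑' m : ℕ, 2 * ENNReal.ofReal (((m+1:ℕ):ℝ)^2 * q₂ (m+1) * ((2:ℝ)^(m+2))⁻¹) := by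
    rw [hPre, lintegral_iUnion hmeasI hdisjI]
    exact tsum_congr hpiece
  have hA : (∑' m : ℕ, ENNReal.ofReal (((m+1:ℕ):ℝ)^4 * ((2:ℝ)^(m+2))⁻¹)) ≠ ⊤ := by
    have base : Summable (fun k : ℕ => (k:ℝ)^4 * (2⁻¹:ℝ)^k) :=
      summable_pow_mul_geometric_of_norm_lt_one 4 (by rw [norm_inv]; norm_num)
    have base' : Summable (fun m : ℕ => ((m+1:ℕ):ℝ)^4 * (2⁻¹:ℝ)^(m+1)) := by
      have h := (_root_.summable_nat_add_iff 1).mpr base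
      exact h.congr (fun m => by push_cast; ring)
    have hs : Summable (fun m : ℕ => ((m+1:ℕ):ℝ)^4 * ((2:ℝ)^(m+2))⁻¹) := by
      apply (base'.mul_right 2⁻¹).congr
      intro m
      rw [← inv_pow, pow_succ]
      ring
    rw [← ENNReal.ofReal_tsum_of_nonneg (fun m => by positivity) hs]
    exact ENNReal.ofReal_ne_top
  have hdisjJ2 : Pairwise (Function.onFun Disjoint fun m : ℕ => J2 (m+1)) := by
    intro i j hij
    exact ((Iset_disj (Nat.le_add_left 1 i) (Nat.le_add_left 1 j) (by omega)).mono
      (J2_subset (Nat.le_add_left 1 i)) (J2_subset (Nat.le_add_left 1 j)))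
  have hB : (∑' m : ℕ, ENNReal.ofReal ((q₂ (m+1))^2 * ((2:ℝ)^(m+2))⁻¹)) ≠ ⊤ := by
    have hterm : ∀ m : ℕ, ENNReal.ofReal ((q₂ (m+1))^2 * ((2:ℝ)^(m+2))⁻¹)
        = ∫⁻ ω in J2 (m+1), ENNReal.ofReal (d ω ^ 2) ∂volume := by
      intro m
      have hn : 1 ≤ m + 1 := Nat.le_add_left 1 m
      rw [setLIntegral_congr_fun_ae (μ := volume) (s := J2 (m+1))
        (f := fun ω => ENNReal.ofReal (d ω ^ 2))
        (g := fun _ => ENNReal.ofReal ((q₂ (m+1)) ^ 2)) (measJ2 (m+1))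
        (Filter.Eventually.of_forall (fun ω hω => by
          show ENNReal.ofReal (d ω ^ 2) = ENNReal.ofReal ((q₂ (m+1)) ^ 2)
          rw [(hdJ (m+1) hn).2 ω hω])),
        setLIntegral_const, vol_J2 hn, ← ENNReal.ofReal_mul (sq_nonneg _)]
    have hUsub : (⋃ m : ℕ, J2 (m+1)) ⊆ Set.Ioc (0:ℝ) 1 :=
      Set.iUnion_subset fun m =>
        (J2_subset (Nat.le_add_left 1 m)).trans (Iset_subset_Ioc (Nat.le_add_left 1 m))
    have hle : (∑' m : ℕ, ∫⁻ ω in J2 (m+1), ENNReal.ofReal (d ω ^ 2) ∂volume)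
        ≤ ∫⁻ ω, ENNReal.ofReal (d ω ^ 2) ∂Pmeas := by
      rw [← lintegral_iUnion (fun m => measJ2 (m+1)) hdisjJ2, Pmeas]
      exact lintegral_mono' (Measure.restrict_mono hUsub le_rfl) le_rfl
    have hfin2 : ∫⁻ ω, ENNReal.ofReal (d ω ^ 2) ∂Pmeas < ⊤ := by
      have h2 := hL2.2
      rw [HasFiniteIntegral] at h2
      refine lt_of_eq_of_lt ?_ h2
      apply lintegral_congr
      intro ω
      rw [Real.enorm_eq_ofReal (sq_nonneg _)]
    have hle' : (∑' m : ℕ, ENNReal.ofReal ((q₂ (m+1))^2 * ((2:ℝ)^(m+2))⁻¹))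
        ≤ ∫⁻ ω, ENNReal.ofReal (d ω ^ 2) ∂Pmeas := by
      rw [tsum_congr hterm]
      exact hle
    exact (lt_of_le_of_lt hle' hfin2).ne
  have hbound : ∀ m : ℕ, 2 * ENNReal.ofReal (((m+1:ℕ):ℝ)^2 * q₂ (m+1) * ((2:ℝ)^(m+2))⁻¹)
      ≤ 2 * (ENNReal.ofReal (((m+1:ℕ):ℝ)^4 * ((2:ℝ)^(m+2))⁻¹)
           + ENNReal.ofReal ((q₂ (m+1))^2 * ((2:ℝ)^(m+2))⁻¹)) := by
    intro m
    gcongr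
    refine le_trans (ENNReal.ofReal_le_ofReal ?_) ENNReal.ofReal_add_le
    have ht : (0:ℝ) ≤ ((2:ℝ)^(m+2))⁻¹ := by positivity
    have hAM : ((m+1:ℕ):ℝ)^2 * q₂ (m+1) ≤ ((m+1:ℕ):ℝ)^4 + (q₂ (m+1))^2 := by
      nlinarith [sq_nonneg (((m+1:ℕ):ℝ)^2 - q₂ (m+1)),
        mul_nonneg (sq_nonneg ((m+1:ℕ):ℝ)) (hq₂ (m+1))]
    nlinarith [mul_le_mul_of_nonneg_right hAM ht]
  have hfing : HasFiniteIntegral g Pmeas := by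
    rw [HasFiniteIntegral]
    simp only [enorm_eq_nnnorm]
    rw [htot]
    apply lt_of_le_of_lt (ENNReal.tsum_le_tsum hbound)
    rw [ENNReal.tsum_mul_left, ENNReal.tsum_add]
    exact ENNReal.mul_lt_top (by norm_num) (ENNReal.add_lt_top.mpr ⟨hA.lt_top, hB.lt_top⟩)
  have hgint : Integrable g Pmeas := ⟨hgm.aestronglyMeasurable, hfing⟩
  have hIntFxQ : Integrable Fx Q := by
    rw [hQ', integrable_withDensity_iff_integrable_smul hfm, hsmul]
    exact hgint
  have hac : Q ≪ Pmeas := by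
    rw [hQ]; exact withDensity_absolutelyContinuous _ _
  have haeQ : X₁ =ᵐ[Q] Fx := (X1_ae_Fx X₁ hX₁).filter_mono hac.ae_le
  refine ⟨hIntFxQ.congr haeQ.symm, ?_⟩
  have hIOn : IntegrableOn g (⋃ m : ℕ, Iset (m+1)) volume := by
    rw [IntegrableOn, ← Ioc_eq_iUnion]
    exact hgint
  have hIOc : IntegrableOn g (Set.Ioc (0:ℝ) 1) volume := hgint
  have hzero : ∀ m : ℕ, ∫ ω in Iset (m+1), g ω ∂volume = 0 := by
    intro m
    have hn : 1 ≤ m + 1 := Nat.le_add_left 1 m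
    have hI1 : IntegrableOn g (J1 (m+1)) volume :=
      hIOc.mono_set ((J1_subset hn).trans (Iset_subset_Ioc hn))
    have hI2 : IntegrableOn g (J2 (m+1)) volume :=
      hIOc.mono_set ((J2_subset hn).trans (Iset_subset_Ioc hn))
    rw [← J1_union_J2 hn, setIntegral_union (J1_disj_J2 (m+1)) (measJ2 (m+1)) hI1 hI2,
      setIntegral_congr_fun (μ := volume) (f := g)
        (g := fun _ => (((m+1:ℕ):ℝ)^2 * q₂ (m+1))) (measJ1 (m+1))
        (fun ω hω => hg1 (m+1) hn ω hω),
      setIntegral_congr_fun (μ := volume) (f := g)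
        (g := fun _ => -(((m+1:ℕ):ℝ)^2 * q₂ (m+1))) (measJ2 (m+1))
        (fun ω hω => hg2 (m+1) hn ω hω),
      setIntegral_const, setIntegral_const, measureReal_def, measureReal_def, vol_J1 hn, vol_J2 hn,
      ENNReal.toReal_ofReal (by positivity)]
    simp only [smul_eq_mul]
    ring
  rw [integral_congr_ae haeQ, hQ', integral_withDensity_eq_integral_smul hfm, hsmul,
    hPre, integral_iUnion hmeasI hdisjI hIOn, tsum_congr hzero, tsum_zero]

/-- Example 9 of Biagini–Frittelli: (i) every separating measure `Q` (probability `Q ≪ P`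
with density constantly `q₁ n` on `J_n^1`, `q₂ n` on `J_n^2`, `q₁ n = n·q₂ n`) whose
density is square-integrable w.r.t. `P` (finite generalized entropy for `Φ(y) = y²`)
satisfies `X₁ ∈ L¹(Q)` and `E_Q[X₁] = 0`; (ii) no admissible strategy super-replicates
`X₁` from any initial capital `x`, i.e. the super replication price of `X₁` is `+∞`. -/
theorem example9_claim_X1
    (X₁ : ℝ → ℝ)
    (hX₁ : ∀ n : ℕ, 1 ≤ n →
      (∀ ω ∈ J1 n, X₁ ω = (n : ℝ)) ∧ (∀ ω ∈ J2 n, X₁ ω = -((n : ℝ) ^ 2))) :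
    (∀ (q₁ q₂ : ℕ → ℝ) (d : ℝ → ℝ) (Q : Measure ℝ),
      (∀ n, 0 ≤ q₁ n) → (∀ n, 0 ≤ q₂ n) → Measurable d →
      (∀ n : ℕ, 1 ≤ n → (∀ ω ∈ J1 n, d ω = q₁ n) ∧ (∀ ω ∈ J2 n, d ω = q₂ n)) →
      Q = Pmeas.withDensity (fun ω => ENNReal.ofReal (d ω)) →
      IsProbabilityMeasure Q →
      (∀ n : ℕ, 1 ≤ n → q₁ n = (n : ℝ) * q₂ n) →
      Integrable (fun ω => d ω ^ 2) Pmeas →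
      Integrable X₁ Q ∧ ∫ ω, X₁ ω ∂Q = 0) ∧
    ∀ x : ℝ, ¬ ∃ α : ℝ → ℝ, IsAdmissible X₁ α ∧ ∀ᵐ ω ∂Pmeas, X₁ ω ≤ x + α ω * X₁ ω := by
  exact ⟨fun q₁ q₂ d Q hq₁ hq₂ hd hdJ hQ hprob hsep hL2 =>
    part_one X₁ hX₁ q₁ q₂ d Q hq₁ hq₂ hd hdJ hQ hprob hsep hL2, part_two X₁ hX₁⟩
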